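/- arXiv:1211.4166 — 3 statements merged into one kernel-verified Lean document; each statement's English description precedes it below -/
import Mathlib

section
/- Let z = z(x,y) be a C² convex function on the rectangle [-c,c] × [0,b] (with b, c > 0). Suppose that z_x(x,0) = z_y(x,0) = 0 for all x ∈ [-c,c], and that m ≤ z_yy(x,y) ≤ M throughout the rectangle. Then there exists a point x ∈ [-c,c] such that z_xx(x,b) ≤ (M - m)·b²/c². -/
open Set

lemma mono_aux {a₁ a₂ : ℝ} {f g : ℝ → ℝ}
    (hf : ∀ x ∈ Set.Icc a₁ a₂, HasDerivWithinAt f (g x) (Set.Icc a₁ a₂) x)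
    (hg : ∀ x ∈ Set.Icc a₁ a₂, 0 ≤ g x) : MonotoneOn f (Set.Icc a₁ a₂) :=
  monotoneOn_of_hasDerivWithinAt_nonneg (convex_Icc _ _)
    (fun x hx => (hf x hx).continuousWithinAt)
    (fun x hx => (hf x (interior_subset hx)).mono interior_subset)
    (fun x hx => hg x (interior_subset hx))

lemma strict_aux {a₁ a₂ : ℝ} {f g : ℝ → ℝ}
    (hf : ∀ x ∈ Set.Icc a₁ a₂, HasDerivWithinAt f (g x) (Set.Icc a₁ a₂) x)
    (hg : ∀ x ∈ interior (Set.Icc a₁ a₂), 0 < g x) : StrictMonoOn f (Set.Icc a₁ a₂) :=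
  strictMonoOn_of_hasDerivWithinAt_pos (convex_Icc _ _)
    (fun x hx => (hf x hx).continuousWithinAt)
    (fun x hx => (hf x (interior_subset hx)).mono interior_subset) hg

lemma slice_vert {c b : ℝ} {F : ℝ × ℝ → ℝ} {x y : ℝ}
    (hx : x ∈ Set.Icc (-c) c)
    (hF : DifferentiableWithinAt ℝ F (Set.Icc (-c) c ×ˢ Set.Icc 0 b) (x, y)) :
    HasDerivWithinAt (fun t => F (x, t))
      (fderivWithin ℝ F (Set.Icc (-c) c ×ˢ Set.Icc 0 b) (x, y) (0, 1)) (Set.Icc 0 b) y := by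
  have hl : HasDerivAt (fun t : ℝ => ((x : ℝ), t)) ((0 : ℝ), (1 : ℝ)) y :=
    (hasDerivAt_const y x).prodMk (hasDerivAt_id y)
  exact hF.hasFDerivWithinAt.comp_hasDerivWithinAt y hl.hasDerivWithinAt
    (fun t ht => Set.mk_mem_prod hx ht)

lemma slice_horiz {c b : ℝ} {F : ℝ × ℝ → ℝ} {x y : ℝ}
    (hy : y ∈ Set.Icc 0 b)
    (hF : DifferentiableWithinAt ℝ F (Set.Icc (-c) c ×ˢ Set.Icc 0 b) (x, y)) :
    HasDerivWithinAt (fun t => F (t, y))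
      (fderivWithin ℝ F (Set.Icc (-c) c ×ˢ Set.Icc 0 b) (x, y) (1, 0)) (Set.Icc (-c) c) x := by
  have hl : HasDerivAt (fun t : ℝ => (t, (y : ℝ))) ((1 : ℝ), (0 : ℝ)) x :=
    (hasDerivAt_id x).prodMk (hasDerivAt_const x y)
  exact hF.hasFDerivWithinAt.comp_hasDerivWithinAt x hl.hasDerivWithinAt
    (fun t ht => Set.mk_mem_prod ht hy)

lemma hlin (a x : ℝ) : HasDerivAt (fun t => a * t) a x := by
  simpa using (hasDerivAt_id x).const_mul a

lemma hquad (a x : ℝ) : HasDerivAt (fun t => a * t ^ 2 / 2) (a * x) x := by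
  have := ((hasDerivAt_pow 2 x).const_mul a).div_const 2
  refine this.congr_deriv ?_
  push_cast
  ring

open scoped RealInnerProductSpace

/-- **Convexity lemma (two variables).** If `z` is a `C²` convex function on the rectangle
`[-c,c] × [0,b]` with `z_x = z_y = 0` along the edge `y = 0` and `m ≤ z_yy ≤ M` throughout,
then `z_xx(x, b) ≤ (M - m) b² / c²` at some `x ∈ [-c,c]`. -/
theorem convex_rectangle_lemma (b c m M : ℝ) (hb : 0 < b) (hc : 0 < c)
    (z : ℝ × ℝ → ℝ) (R : Set (ℝ × ℝ)) (hR : R = Set.Icc (-c) c ×ˢ Set.Icc 0 b)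
    (hsmooth : ContDiffOn ℝ 2 z R)
    (hconv : ConvexOn ℝ R z)
    (hzx0 : ∀ x ∈ Set.Icc (-c) c, fderivWithin ℝ z R (x, 0) (1, 0) = 0)
    (hzy0 : ∀ x ∈ Set.Icc (-c) c, fderivWithin ℝ z R (x, 0) (0, 1) = 0)
    (hzyy : ∀ p ∈ R,
      m ≤ fderivWithin ℝ (fun q => fderivWithin ℝ z R q (0, 1)) R p (0, 1) ∧
      fderivWithin ℝ (fun q => fderivWithin ℝ z R q (0, 1)) R p (0, 1) ≤ M) :
    ∃ x ∈ Set.Icc (-c) c,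
      fderivWithin ℝ (fun q => fderivWithin ℝ z R q (1, 0)) R (x, b) (1, 0)
        ≤ (M - m) * b ^ 2 / c ^ 2 := by
  subst hR
  set R := Set.Icc (-c) c ×ˢ Set.Icc 0 b with hRdef
  have h0mem : (0 : ℝ) ∈ Set.Icc (-c) c := ⟨by linarith, hc.le⟩
  have hcmem : c ∈ Set.Icc (-c) c := ⟨by linarith, le_rfl⟩
  have hncmem : -c ∈ Set.Icc (-c) c := ⟨le_rfl, by linarith⟩
  have hbmem : b ∈ Set.Icc 0 b := ⟨hb.le, le_rfl⟩
  have h0bmem : (0 : ℝ) ∈ Set.Icc 0 b := ⟨le_rfl, hb.le⟩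
  have hU : UniqueDiffOn ℝ R := by
    apply uniqueDiffOn_convex ((convex_Icc _ _).prod (convex_Icc _ _))
    rw [hRdef, interior_prod_eq, interior_Icc, interior_Icc]
    exact ⟨(0, b / 2), ⟨by linarith, by linarith⟩, ⟨by linarith, by linarith⟩⟩
  have hzd : DifferentiableOn ℝ z R := hsmooth.differentiableOn (by norm_num)
  have hZ1 : ContDiffOn ℝ 1 (fderivWithin ℝ z R) R := hsmooth.fderivWithin hU (by norm_num)
  have hFd : ∀ v : ℝ × ℝ, DifferentiableOn ℝ (fun q => fderivWithin ℝ z R q v) R :=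
    fun v => (hZ1.clm_apply contDiffOn_const).differentiableOn one_ne_zero
  -- vertical slices
  have hf' : ∀ x ∈ Set.Icc (-c) c, ∀ y ∈ Set.Icc 0 b,
      HasDerivWithinAt (fun t => z (x, t)) (fderivWithin ℝ z R (x, y) (0, 1)) (Set.Icc 0 b) y :=
    fun x hx y hy => slice_vert hx (hzd _ (Set.mk_mem_prod hx hy))
  have hg' : ∀ x ∈ Set.Icc (-c) c, ∀ y ∈ Set.Icc 0 b,
      HasDerivWithinAt (fun t => fderivWithin ℝ z R (x, t) (0, 1))
        (fderivWithin ℝ (fun q => fderivWithin ℝ z R q (0, 1)) R (x, y) (0, 1))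
        (Set.Icc 0 b) y :=
    fun x hx y hy => slice_vert hx (hFd (0, 1) _ (Set.mk_mem_prod hx hy))
  -- key vertical bounds
  have key_vert : ∀ x ∈ Set.Icc (-c) c,
      m * b ^ 2 / 2 ≤ z (x, b) - z (x, 0) ∧ z (x, b) - z (x, 0) ≤ M * b ^ 2 / 2 := by
    intro x hx
    have h0 := hzy0 x hx
    have hgu : ∀ y ∈ Set.Icc 0 b, fderivWithin ℝ z R (x, y) (0, 1) ≤ M * y := by
      intro y hy
      have hmono := mono_aux (f := fun t => M * t - fderivWithin ℝ z R (x, t) (0, 1))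
        (g := fun t => M - fderivWithin ℝ (fun q => fderivWithin ℝ z R q (0, 1)) R (x, t) (0, 1))
        (fun t ht => (hlin M t).hasDerivWithinAt.sub (hg' x hx t ht))
        (fun t ht => by have := (hzyy (x, t) (Set.mk_mem_prod hx ht)).2; linarith)
      have h2 : M * 0 - fderivWithin ℝ z R (x, 0) (0, 1)
          ≤ M * y - fderivWithin ℝ z R (x, y) (0, 1) := hmono h0bmem hy hy.1
      rw [h0] at h2; linarith
    have hgl : ∀ y ∈ Set.Icc 0 b, m * y ≤ fderivWithin ℝ z R (x, y) (0, 1) := by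
      intro y hy
      have hmono := mono_aux (f := fun t => fderivWithin ℝ z R (x, t) (0, 1) - m * t)
        (g := fun t => fderivWithin ℝ (fun q => fderivWithin ℝ z R q (0, 1)) R (x, t) (0, 1) - m)
        (fun t ht => (hg' x hx t ht).sub (hlin m t).hasDerivWithinAt)
        (fun t ht => by have := (hzyy (x, t) (Set.mk_mem_prod hx ht)).1; linarith)
      have h2 : fderivWithin ℝ z R (x, 0) (0, 1) - m * 0
          ≤ fderivWithin ℝ z R (x, y) (0, 1) - m * y := hmono h0bmem hy hy.1
      rw [h0] at h2; linarith
    constructor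
    · have hmono := mono_aux (f := fun t => z (x, t) - m * t ^ 2 / 2)
        (g := fun t => fderivWithin ℝ z R (x, t) (0, 1) - m * t)
        (fun t ht => (hf' x hx t ht).sub (hquad m t).hasDerivWithinAt)
        (fun t ht => by have := hgl t ht; linarith)
      have h2 : z (x, 0) - m * 0 ^ 2 / 2 ≤ z (x, b) - m * b ^ 2 / 2 := hmono h0bmem hbmem hb.le
      nlinarith [h2]
    · have hmono := mono_aux (f := fun t => M * t ^ 2 / 2 - z (x, t))
        (g := fun t => M * t - fderivWithin ℝ z R (x, t) (0, 1))
        (fun t ht => (hquad M t).hasDerivWithinAt.sub (hf' x hx t ht))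
        (fun t ht => by have := hgu t ht; linarith)
      have h2 : M * 0 ^ 2 / 2 - z (x, 0) ≤ M * b ^ 2 / 2 - z (x, b) := hmono h0bmem hbmem hb.le
      nlinarith [h2]
  -- the bottom edge is constant
  have hbot : ∀ x ∈ Set.Icc (-c) c, z (x, 0) = z (0, 0) := by
    have hd0 : ∀ t ∈ Set.Icc (-c) c,
        HasDerivWithinAt (fun s => z (s, 0)) 0 (Set.Icc (-c) c) t := by
      intro t ht
      have := slice_horiz h0bmem (hzd _ (Set.mk_mem_prod ht h0bmem))
      rwa [hzx0 t ht] at this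
    have h1 : MonotoneOn (fun s => z (s, 0)) (Set.Icc (-c) c) :=
      mono_aux (g := fun _ => 0) hd0 (fun _ _ => le_rfl)
    have h2 : MonotoneOn (fun s => -z (s, 0)) (Set.Icc (-c) c) :=
      mono_aux (g := fun _ => 0) (fun t ht => by have := (hd0 t ht).neg; rw [neg_zero] at this; exact this) (fun _ _ => le_rfl)
    intro x hx
    rcases le_total x 0 with h | h
    · have a1 : z (x, 0) ≤ z (0, 0) := h1 hx h0mem h
      have a2 : -z (x, 0) ≤ -z (0, 0) := h2 hx h0mem h
      linarith
    · have a1 : z (0, 0) ≤ z (x, 0) := h1 h0mem hx h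
      have a2 : -z (0, 0) ≤ -z (x, 0) := h2 h0mem hx h
      linarith
  -- horizontal derivatives on the top edge
  have hw' : ∀ x ∈ Set.Icc (-c) c,
      HasDerivWithinAt (fun t => z (t, b)) (fderivWithin ℝ z R (x, b) (1, 0))
        (Set.Icc (-c) c) x :=
    fun x hx => slice_horiz hbmem (hzd _ (Set.mk_mem_prod hx hbmem))
  have hW' : ∀ x ∈ Set.Icc (-c) c,
      HasDerivWithinAt (fun t => fderivWithin ℝ z R (t, b) (1, 0))
        (fderivWithin ℝ (fun q => fderivWithin ℝ z R q (1, 0)) R (x, b) (1, 0))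
        (Set.Icc (-c) c) x :=
    fun x hx => slice_horiz hbmem (hFd (1, 0) _ (Set.mk_mem_prod hx hbmem))
  by_contra hcon
  push_neg at hcon
  set K := (M - m) * b ^ 2 / c ^ 2 with hK
  have hKc : K * c ^ 2 = (M - m) * b ^ 2 := by
    rw [hK]; field_simp
  set W0 := fderivWithin ℝ z R (0, b) (1, 0) with hW0
  have hsub1 : Set.Icc (0 : ℝ) c ⊆ Set.Icc (-c) c := fun t ht => ⟨by linarith [ht.1], ht.2⟩
  have hsub2 : Set.Icc (-c) (0 : ℝ) ⊆ Set.Icc (-c) c := fun t ht => ⟨ht.1, by linarith [ht.2]⟩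
  have hsm : StrictMonoOn (fun t => fderivWithin ℝ z R (t, b) (1, 0) - K * t)
      (Set.Icc (-c) c) := by
    apply strict_aux (g := fun t =>
      fderivWithin ℝ (fun q => fderivWithin ℝ z R q (1, 0)) R (t, b) (1, 0) - K)
      (fun t ht => (hW' t ht).sub (hlin K t).hasDerivWithinAt)
    intro t ht
    rw [interior_Icc] at ht
    have := hcon t (Ioo_subset_Icc_self ht)
    linarith
  have hGr : StrictMonoOn (fun t => z (t, b) - W0 * t - K * t ^ 2 / 2) (Set.Icc 0 c) := by
    apply strict_aux (g := fun t => fderivWithin ℝ z R (t, b) (1, 0) - W0 - K * t)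
      (fun t ht => (((hw' t (hsub1 ht)).mono hsub1).sub (hlin W0 t).hasDerivWithinAt).sub
        (hquad K t).hasDerivWithinAt)
    intro t ht
    rw [interior_Icc] at ht
    have h : W0 - K * 0 < fderivWithin ℝ z R (t, b) (1, 0) - K * t :=
      hsm h0mem (hsub1 (Ioo_subset_Icc_self ht)) ht.1
    linarith
  have hGl : StrictMonoOn (fun t => -(z (t, b) - W0 * t - K * t ^ 2 / 2))
      (Set.Icc (-c) 0) := by
    apply strict_aux (g := fun t => -(fderivWithin ℝ z R (t, b) (1, 0) - W0 - K * t))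
      (fun t ht => ((((hw' t (hsub2 ht)).mono hsub2).sub (hlin W0 t).hasDerivWithinAt).sub
        (hquad K t).hasDerivWithinAt).neg)
    intro t ht
    rw [interior_Icc] at ht
    have h : fderivWithin ℝ z R (t, b) (1, 0) - K * t < W0 - K * 0 :=
      hsm (hsub2 (Ioo_subset_Icc_self ht)) h0mem ht.2
    linarith
  have h1 : z (0, b) - W0 * 0 - K * 0 ^ 2 / 2 < z (c, b) - W0 * c - K * c ^ 2 / 2 :=
    hGr ⟨le_rfl, hc.le⟩ ⟨hc.le, le_rfl⟩ hc
  have h2 : -(z (-c, b) - W0 * (-c) - K * (-c) ^ 2 / 2)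
      < -(z (0, b) - W0 * 0 - K * 0 ^ 2 / 2) :=
    hGl ⟨le_rfl, by linarith⟩ ⟨by linarith, le_rfl⟩ (by linarith)
  obtain ⟨kc1, kc2⟩ := key_vert c hcmem
  obtain ⟨knc1, knc2⟩ := key_vert (-c) hncmem
  obtain ⟨k01, k02⟩ := key_vert 0 h0mem
  have e1 := hbot c hcmem
  have e2 := hbot (-c) hncmem
  nlinarith [h1, h2, kc2, knc2, k01, hKc, e1, e2]
end

section
/- Let a > 0, let f_a be Pogorelov's profile function, and define z(ρ) = ∫_{a/2}^{ρ} √(1 - f_a'(t)²) dt for a/2 < ρ < 3a/4. Then z is twice differentiable on (a/2, 3a/4) with z''(ρ) = -f_a''(ρ)f_a'(ρ)/√(1 - f_a'(ρ)²), and the limit of z''(ρ) as ρ → a/2 from the right equals (√3/2)·a². In particular, since z extended by 0 on [0, a/2] has z'' ≡ 0 to the left of a/2, the extended function z is not twice continuously differentiable at ρ = a/2. -/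
open scoped RealInnerProductSpace

open Classical in
/-- Pogorelov's profile function `f_a`. -/
noncomputable def pogProfile (a ρ : ℝ) : ℝ :=
  if ρ ≤ a / 2 then ρ else ρ + a * (ρ - a) ^ 3 * (ρ - a / 2) ^ 3

open Classical in
/-- The height function of the surface of revolution, extended by `0` for `ρ ≤ a/2`:
`z(ρ) = ∫_{a/2}^ρ √(1 - f_a'(t)²) dt`. -/
noncomputable def pogZExt (a ρ : ℝ) : ℝ :=
  if ρ ≤ a / 2 then 0
  else ∫ t in (a / 2)..ρ, Real.sqrt (1 - (deriv (pogProfile a) t) ^ 2)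

/-- First derivative of the profile on `(a/2, ∞)`. -/
noncomputable def pogD1 (a ρ : ℝ) : ℝ :=
  1 + 3*a*(ρ-a)^2*(ρ-a/2)^2*(2*ρ-3*a/2)

/-- Second derivative of the profile on `(a/2, ∞)`. -/
noncomputable def pogD2 (a ρ : ℝ) : ℝ :=
  6*a*(ρ-a)*(ρ-a/2)*((ρ-a/2)*(2*ρ-3*a/2)+(ρ-a)*(2*ρ-3*a/2)+(ρ-a)*(ρ-a/2))

lemma continuous_pogD1 (a : ℝ) : Continuous (pogD1 a) := by
  unfold pogD1; fun_prop

lemma hasDerivAt_pogPoly (a ρ : ℝ) :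
    HasDerivAt (fun x : ℝ => x + a * (x - a) ^ 3 * (x - a / 2) ^ 3) (pogD1 a ρ) ρ := by
  have h1 : HasDerivAt (fun x : ℝ => x - a) 1 ρ := (hasDerivAt_id ρ).sub_const a
  have h2 : HasDerivAt (fun x : ℝ => x - a/2) 1 ρ := (hasDerivAt_id ρ).sub_const (a/2)
  have h := (hasDerivAt_id ρ).add (((h1.pow 3).const_mul a).mul (h2.pow 3))
  refine h.congr_deriv ?_
  unfold pogD1; simp only [Pi.pow_apply, Pi.mul_apply]; push_cast; ring

lemma hasDerivAt_pogD1 (a ρ : ℝ) : HasDerivAt (pogD1 a) (pogD2 a ρ) ρ := by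
  have h1 : HasDerivAt (fun x : ℝ => x - a) 1 ρ := (hasDerivAt_id ρ).sub_const a
  have h2 : HasDerivAt (fun x : ℝ => x - a/2) 1 ρ := (hasDerivAt_id ρ).sub_const (a/2)
  have h3 : HasDerivAt (fun x : ℝ => 2*x - 3*a/2) 2 ρ := by
    simpa using ((hasDerivAt_id ρ).const_mul 2).sub_const (3*a/2)
  have h := (hasDerivAt_const ρ (1:ℝ)).add
    (((((h1.pow 2).const_mul (3*a)).mul (h2.pow 2)).mul h3))
  refine h.congr_deriv ?_
  unfold pogD2; simp only [Pi.pow_apply, Pi.mul_apply]; push_cast; ring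

lemma pogProfile_eventuallyEq {a x : ℝ} (hx : a/2 < x) :
    pogProfile a =ᶠ[nhds x] fun y => y + a * (y - a) ^ 3 * (y - a / 2) ^ 3 := by
  filter_upwards [Ioi_mem_nhds hx] with y hy
  simp only [pogProfile, if_neg (not_le.mpr (Set.mem_Ioi.mp hy))]

lemma deriv_pogProfile {a x : ℝ} (hx : a/2 < x) : deriv (pogProfile a) x = pogD1 a x := by
  rw [(pogProfile_eventuallyEq hx).deriv_eq, (hasDerivAt_pogPoly a x).deriv]

lemma deriv2_pogProfile {a x : ℝ} (hx : a/2 < x) :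
    deriv (deriv (pogProfile a)) x = pogD2 a x := by
  have hev : deriv (pogProfile a) =ᶠ[nhds x] pogD1 a := by
    filter_upwards [Ioi_mem_nhds hx] with y hy
    exact deriv_pogProfile hy
  rw [hev.deriv_eq, (hasDerivAt_pogD1 a x).deriv]

lemma measurable_pogPhiInt (a : ℝ) :
    Measurable (fun t => Real.sqrt (1 - (deriv (pogProfile a) t) ^ 2)) :=
  Real.continuous_sqrt.measurable.comp
    (measurable_const.sub ((measurable_deriv (pogProfile a)).pow_const 2))

lemma continuousAt_pogPhiInt {a x : ℝ} (hx : a/2 < x) :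
    ContinuousAt (fun t => Real.sqrt (1 - (deriv (pogProfile a) t) ^ 2)) x := by
  have hev : (fun t => Real.sqrt (1 - (pogD1 a t) ^ 2)) =ᶠ[nhds x]
      (fun t => Real.sqrt (1 - (deriv (pogProfile a) t) ^ 2)) := by
    filter_upwards [Ioi_mem_nhds hx] with y hy
    rw [deriv_pogProfile hy]
  exact (Real.continuous_sqrt.comp
    (continuous_const.sub ((continuous_pogD1 a).pow 2))).continuousAt.congr hev

lemma hasDerivAt_pogZExt {a x : ℝ} (hx : a/2 < x) :
    HasDerivAt (pogZExt a) (Real.sqrt (1 - (pogD1 a x) ^ 2)) x := by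
  set φ : ℝ → ℝ := fun t => Real.sqrt (1 - (deriv (pogProfile a) t) ^ 2) with hφ
  have hint : IntervalIntegrable φ MeasureTheory.volume (a/2) x := by
    apply (intervalIntegrable_const (c := (1:ℝ))).mono_fun
      ((measurable_pogPhiInt a).aestronglyMeasurable.restrict)
    refine MeasureTheory.ae_of_all _ fun t => ?_
    simp only [hφ, Real.norm_eq_abs, abs_of_nonneg (Real.sqrt_nonneg _), norm_one]
    exact Real.sqrt_le_one.mpr (by nlinarith [sq_nonneg (deriv (pogProfile a) t)])
  have hmeas : StronglyMeasurableAtFilter φ (nhds x) :=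
    ⟨Set.univ, Filter.univ_mem, (measurable_pogPhiInt a).aestronglyMeasurable.restrict⟩
  have hF : HasDerivAt (fun u => ∫ t in (a/2)..u, φ t) (φ x) x :=
    intervalIntegral.integral_hasDerivAt_right hint hmeas (continuousAt_pogPhiInt hx)
  have hev : pogZExt a =ᶠ[nhds x] fun u => ∫ t in (a/2)..u, φ t := by
    filter_upwards [Ioi_mem_nhds hx] with y hy
    simp only [pogZExt, if_neg (not_le.mpr (Set.mem_Ioi.mp hy)), hφ]
  have hEnd := hF.congr_of_eventuallyEq hev
  have hval : φ x = Real.sqrt (1 - (pogD1 a x) ^ 2) := by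
    simp only [hφ, deriv_pogProfile hx]
  rwa [hval] at hEnd

lemma deriv2_pogZExt {a ρ : ℝ} (hρ : a/2 < ρ) :
    deriv (deriv (pogZExt a)) ρ =
      -(pogD2 a ρ * pogD1 a ρ) / Real.sqrt (1 - (pogD1 a ρ) ^ 2) := by
  have hev : deriv (pogZExt a) =ᶠ[nhds ρ] fun x => Real.sqrt (1 - (pogD1 a x) ^ 2) := by
    filter_upwards [Ioi_mem_nhds hρ] with y hy
    exact (hasDerivAt_pogZExt hy).deriv
  rw [hev.deriv_eq]
  by_cases hpos : 0 < 1 - (pogD1 a ρ) ^ 2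
  · have hd : HasDerivAt (fun x => 1 - (pogD1 a x) ^ 2) (-(2 * pogD1 a ρ * pogD2 a ρ)) ρ := by
      have := (hasDerivAt_const ρ (1:ℝ)).sub ((hasDerivAt_pogD1 a ρ).pow 2)
      refine this.congr_deriv ?_
      push_cast; ring
    have hs := hd.sqrt (ne_of_gt hpos)
    rw [hs.deriv]
    have hsq : Real.sqrt (1 - (pogD1 a ρ) ^ 2) ≠ 0 :=
      ne_of_gt (Real.sqrt_pos.mpr hpos)
    field_simp
  · have h0 : Real.sqrt (1 - (pogD1 a ρ) ^ 2) = 0 :=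
      Real.sqrt_eq_zero'.mpr (not_lt.mp hpos)
    rw [h0, div_zero]
    by_cases hdiff : DifferentiableAt ℝ (fun x => Real.sqrt (1 - (pogD1 a x) ^ 2)) ρ
    · have hmin : IsLocalMin (fun x => Real.sqrt (1 - (pogD1 a x) ^ 2)) ρ := by
        refine Filter.Eventually.of_forall fun y => ?_
        simp only [h0]
        exact Real.sqrt_nonneg _
      exact hmin.deriv_eq_zero
    · exact deriv_zero_of_not_differentiableAt hdiff

/-- The function giving the limit value of `z''` at `a/2⁺`. -/
noncomputable def pogPhi (a ρ : ℝ) : ℝ :=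
  -(6*a*(ρ-a)*((ρ-a/2)*(2*ρ-3*a/2)+(ρ-a)*(2*ρ-3*a/2)+(ρ-a)*(ρ-a/2)) * pogD1 a ρ) /
    (Real.sqrt (3*a*(ρ-a)^2*(3*a/2-2*ρ)) * Real.sqrt (1 + pogD1 a ρ))

lemma pogD1_half (a : ℝ) : pogD1 a (a/2) = 1 := by unfold pogD1; ring

lemma sqrt3_val (a : ℝ) (ha : 0 < a) :
    Real.sqrt (3*a^4/4) = Real.sqrt 3 / 2 * a^2 := by
  rw [show 3*a^4/4 = 3 * (a^2/2)^2 by ring, Real.sqrt_mul (by norm_num),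
    Real.sqrt_sq (by positivity)]
  ring

lemma pogPhi_half (a : ℝ) (ha : 0 < a) : pogPhi a (a/2) = Real.sqrt 3 / 2 * a^2 := by
  have h1 := pogD1_half a
  unfold pogPhi
  rw [h1]
  rw [show 3*a*(a/2-a)^2*(3*a/2-2*(a/2)) = 3*a^4/8 by ring]
  rw [show (1:ℝ) + 1 = 2 by norm_num]
  rw [← Real.sqrt_mul (by positivity : (0:ℝ) ≤ 3*a^4/8)]
  rw [show 3*a^4/8*2 = 3*a^4/4 by ring]
  rw [show -(6*a*(a/2-a)*((a/2-a/2)*(2*(a/2)-3*a/2)+(a/2-a)*(2*(a/2)-3*a/2)+(a/2-a)*(a/2-a/2))*1)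
      = 3*a^4/4 by ring]
  rw [sqrt3_val a ha]
  have hs3 : Real.sqrt 3 * Real.sqrt 3 = 3 := Real.mul_self_sqrt (by norm_num)
  have hne : Real.sqrt 3 / 2 * a^2 ≠ 0 := by positivity
  rw [div_eq_iff hne]
  nlinarith [hs3]

lemma tendsto_pogPhi (a : ℝ) (ha : 0 < a) :
    Filter.Tendsto (pogPhi a) (nhds (a/2)) (nhds (Real.sqrt 3 / 2 * a^2)) := by
  have hc : ContinuousAt (pogPhi a) (a/2) := by
    unfold pogPhi
    apply ContinuousAt.div
    · exact Continuous.continuousAt (by unfold pogD1; fun_prop)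
    · exact Continuous.continuousAt (by unfold pogD1; fun_prop)
    · rw [pogD1_half a, show 3*a*(a/2-a)^2*(3*a/2-2*(a/2)) = 3*a^4/8 by ring]
      have h1 : (0:ℝ) < Real.sqrt (3*a^4/8) := Real.sqrt_pos.mpr (by positivity)
      have h2 : (0:ℝ) < Real.sqrt (1+1) := Real.sqrt_pos.mpr (by norm_num)
      positivity
  have := hc.tendsto
  rwa [pogPhi_half a ha] at this

lemma tendsto_deriv2_pogZExt (a : ℝ) (ha : 0 < a) :
    Filter.Tendsto (deriv (deriv (pogZExt a))) (nhdsWithin (a/2) (Set.Ioi (a/2)))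
      (nhds (Real.sqrt 3 / 2 * a^2)) := by
  refine Filter.Tendsto.congr' ?_ ((tendsto_pogPhi a ha).mono_left nhdsWithin_le_nhds)
  have Emem : Set.Ioo (a/2) (3*a/4) ∈ nhdsWithin (a/2) (Set.Ioi (a/2)) :=
    Ioo_mem_nhdsGT_of_mem ⟨le_refl _, by linarith⟩
  have Epos : ∀ᶠ x in nhdsWithin (a/2) (Set.Ioi (a/2)), -1 < pogD1 a x := by
    apply Filter.Eventually.filter_mono nhdsWithin_le_nhds
    have hc : Filter.Tendsto (pogD1 a) (nhds (a/2)) (nhds 1) := by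
      have := (continuous_pogD1 a).tendsto (a/2)
      rwa [pogD1_half a] at this
    exact hc.eventually (eventually_gt_nhds (by norm_num))
  filter_upwards [Emem, Epos] with x hx hpos1
  rw [deriv2_pogZExt hx.1]
  have hu : 0 < x - a/2 := by linarith [hx.1]
  have hxa : x - a ≠ 0 := by have := hx.2; intro h; nlinarith
  have hP : 0 < 3*a*(x-a)^2*(3*a/2-2*x) := by
    have h2 : (0:ℝ) < (x-a)^2 := pow_two_pos_of_ne_zero hxa
    have h3 : (0:ℝ) < 3*a/2-2*x := by linarith [hx.2]
    positivity
  have hT : 0 < 1 + pogD1 a x := by linarith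
  have h5 : 1 - pogD1 a x = (3*a*(x-a)^2*(3*a/2-2*x)) * (x-a/2)^2 := by
    simp only [pogD1]; ring
  have hkey : 1 - (pogD1 a x)^2
      = (3*a*(x-a)^2*(3*a/2-2*x)) * (x-a/2)^2 * (1 + pogD1 a x) := by
    linear_combination (1 + pogD1 a x) * h5
  rw [hkey, Real.sqrt_mul (by positivity), Real.sqrt_mul (le_of_lt hP),
    Real.sqrt_sq (le_of_lt hu)]
  have hsP : (0:ℝ) < Real.sqrt (3*a*(x-a)^2*(3*a/2-2*x)) := Real.sqrt_pos.mpr hP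
  have hsT : (0:ℝ) < Real.sqrt (1 + pogD1 a x) := Real.sqrt_pos.mpr hT
  unfold pogPhi pogD2
  rw [div_eq_div_iff (by positivity) (by positivity)]
  ring

lemma deriv_pogZExt_left {a x : ℝ} (hx : x < a/2) : deriv (pogZExt a) x = 0 := by
  have hev : pogZExt a =ᶠ[nhds x] fun _ => (0:ℝ) := by
    filter_upwards [Iio_mem_nhds hx] with y hy
    simp only [pogZExt, if_pos (le_of_lt (Set.mem_Iio.mp hy))]
  rw [hev.deriv_eq, deriv_const]

lemma deriv2_pogZExt_left {a ρ : ℝ} (hρ : ρ < a/2) : deriv (deriv (pogZExt a)) ρ = 0 := by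
  have hev : deriv (pogZExt a) =ᶠ[nhds ρ] fun _ => (0:ℝ) := by
    filter_upwards [Iio_mem_nhds hρ] with y hy
    exact deriv_pogZExt_left hy
  rw [hev.deriv_eq, deriv_const]

/-- On `(a/2, 3a/4)` the height function satisfies
`z''(ρ) = -f_a''(ρ) f_a'(ρ) / √(1 - f_a'(ρ)²)`, with `z''(ρ) → (√3/2) a²` as `ρ → (a/2)⁺`;
since `z'' ≡ 0` to the left of `a/2`, the extended `z` is not `C²` at `ρ = a/2`. -/
theorem z_second_deriv_jump (a : ℝ) (ha : 0 < a) :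
    (∀ ρ ∈ Set.Ioo (a / 2) (3 * a / 4),
      deriv (deriv (pogZExt a)) ρ =
        -(deriv (deriv (pogProfile a)) ρ * deriv (pogProfile a) ρ) /
          Real.sqrt (1 - (deriv (pogProfile a) ρ) ^ 2)) ∧
    Filter.Tendsto (deriv (deriv (pogZExt a))) (nhdsWithin (a / 2) (Set.Ioi (a / 2)))
      (nhds (Real.sqrt 3 / 2 * a ^ 2)) ∧
    (∀ ρ < a / 2, deriv (deriv (pogZExt a)) ρ = 0) ∧
    ¬ ContinuousAt (deriv (deriv (pogZExt a))) (a / 2) := by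
  have htend := tendsto_deriv2_pogZExt a ha
  refine ⟨?_, htend, fun ρ hρ => deriv2_pogZExt_left hρ, ?_⟩
  · intro ρ hρ
    rw [deriv_pogProfile hρ.1, deriv2_pogProfile hρ.1, deriv2_pogZExt hρ.1]
  · intro hcont
    have h1 : Filter.Tendsto (deriv (deriv (pogZExt a)))
        (nhdsWithin (a/2) (Set.Ioi (a/2))) (nhds (deriv (deriv (pogZExt a)) (a/2))) :=
      hcont.tendsto.mono_left nhdsWithin_le_nhds
    have heq1 : deriv (deriv (pogZExt a)) (a/2) = Real.sqrt 3 / 2 * a ^ 2 :=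
      tendsto_nhds_unique h1 htend
    have h2 : Filter.Tendsto (deriv (deriv (pogZExt a)))
        (nhdsWithin (a/2) (Set.Iio (a/2))) (nhds (deriv (deriv (pogZExt a)) (a/2))) :=
      hcont.tendsto.mono_left nhdsWithin_le_nhds
    have h3 : Filter.Tendsto (deriv (deriv (pogZExt a)))
        (nhdsWithin (a/2) (Set.Iio (a/2))) (nhds 0) := by
      refine Filter.Tendsto.congr' ?_ tendsto_const_nhds
      filter_upwards [self_mem_nhdsWithin] with y hy
      exact (deriv2_pogZExt_left hy).symm
    have heq2 : deriv (deriv (pogZExt a)) (a/2) = 0 := tendsto_nhds_unique h2 h3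
    have hpos : (0:ℝ) < Real.sqrt 3 / 2 * a ^ 2 := by
      have : (0:ℝ) < Real.sqrt 3 := Real.sqrt_pos.mpr (by norm_num)
      positivity
    rw [heq1] at heq2
    linarith
end

section
/- Let a > 0 and let f_a : [0,a) → ℝ be Pogorelov's profile function. Then f_a is of class C^{2,1} on [0, a): f_a is twice continuously differentiable on [0,a) (in particular f_a, f_a' and f_a'' match across ρ = a/2, with f_a'(a/2) = 1 and f_a''(a/2) = 0), and f_a'' is Lipschitz continuous on every compact subinterval of [0, a). -/
open scoped RealInnerProductSpace

noncomputable def pcut (x : ℝ) : ℝ := max x 0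

lemma pcut_abs_le (x : ℝ) : |pcut x| ≤ |x| := by
  unfold pcut
  rcases le_total x 0 with h | h
  · rw [max_eq_right h]; simp [abs_nonneg]
  · rw [max_eq_left h]

lemma pcut_zero : pcut 0 = 0 := by simp [pcut]

lemma hasDerivAt_pcut_pow3 (x : ℝ) :
    HasDerivAt (fun y => pcut y ^ 3) (3 * pcut x ^ 2) x := by
  rcases lt_trichotomy x 0 with hx | hx | hx
  · have hd : HasDerivAt (fun _ : ℝ => (0:ℝ)) 0 x := hasDerivAt_const x 0
    have hev : (fun y => pcut y ^ 3) =ᶠ[nhds x] fun _ => (0:ℝ) := by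
      filter_upwards [Iio_mem_nhds hx] with y hy
      simp [pcut, max_eq_right (le_of_lt (Set.mem_Iio.mp hy))]
    have := hd.congr_of_eventuallyEq hev
    simpa [pcut, max_eq_right hx.le] using this
  · subst hx
    rw [hasDerivAt_iff_tendsto_slope]
    have hval : (3:ℝ) * pcut 0 ^ 2 = 0 := by simp [pcut_zero]
    rw [hval]
    apply squeeze_zero_norm' (a := fun y : ℝ => y ^ 2)
    · filter_upwards [self_mem_nhdsWithin] with y hy
      have hy' : y ≠ 0 := hy
      have hs : slope (fun y => pcut y ^ 3) 0 y = pcut y ^ 3 / y := by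
        simp [slope_def_field, pcut_zero]
      rw [hs, Real.norm_eq_abs, abs_div]
      have h1 : |pcut y ^ 3| ≤ |y| ^ 3 := by
        rw [abs_pow]; exact pow_le_pow_left₀ (abs_nonneg _) (pcut_abs_le y) 3
      have hypos : (0:ℝ) < |y| := abs_pos.mpr hy'
      calc |pcut y ^ 3| / |y| ≤ |y| ^ 3 / |y| := by gcongr
        _ = y ^ 2 := by
            rw [pow_succ, mul_div_assoc, div_self hypos.ne', mul_one, sq_abs]
    · have h2 : Filter.Tendsto (fun y : ℝ => y ^ 2) (nhds 0) (nhds 0) := by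
        simpa using (continuous_pow 2).tendsto (0:ℝ)
      exact h2.mono_left nhdsWithin_le_nhds
  · have hd := hasDerivAt_pow 3 x
    have hev : (fun y => pcut y ^ 3) =ᶠ[nhds x] fun y => y ^ 3 := by
      filter_upwards [Ioi_mem_nhds hx] with y hy
      simp [pcut, max_eq_left (le_of_lt (Set.mem_Ioi.mp hy))]
    have := hd.congr_of_eventuallyEq hev
    simpa [pcut, max_eq_left hx.le] using this

lemma hasDerivAt_pcut_pow2 (x : ℝ) :
    HasDerivAt (fun y => pcut y ^ 2) (2 * pcut x) x := by
  rcases lt_trichotomy x 0 with hx | hx | hx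
  · have hd : HasDerivAt (fun _ : ℝ => (0:ℝ)) 0 x := hasDerivAt_const x 0
    have hev : (fun y => pcut y ^ 2) =ᶠ[nhds x] fun _ => (0:ℝ) := by
      filter_upwards [Iio_mem_nhds hx] with y hy
      simp [pcut, max_eq_right (le_of_lt (Set.mem_Iio.mp hy))]
    have := hd.congr_of_eventuallyEq hev
    simpa [pcut, max_eq_right hx.le] using this
  · subst hx
    rw [hasDerivAt_iff_tendsto_slope]
    have hval : (2:ℝ) * pcut 0 = 0 := by simp [pcut_zero]
    rw [hval]
    apply squeeze_zero_norm' (a := fun y : ℝ => |y|)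
    · filter_upwards [self_mem_nhdsWithin] with y hy
      have hy' : y ≠ 0 := hy
      have hs : slope (fun y => pcut y ^ 2) 0 y = pcut y ^ 2 / y := by
        simp [slope_def_field, pcut_zero]
      rw [hs, Real.norm_eq_abs, abs_div]
      have h1 : |pcut y ^ 2| ≤ |y| ^ 2 := by
        rw [abs_pow]; exact pow_le_pow_left₀ (abs_nonneg _) (pcut_abs_le y) 2
      have hypos : (0:ℝ) < |y| := abs_pos.mpr hy'
      calc |pcut y ^ 2| / |y| ≤ |y| ^ 2 / |y| := by gcongr
        _ = |y| := by
            rw [pow_two, mul_div_assoc, div_self hypos.ne', mul_one]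
    · have h2 : Filter.Tendsto (fun y : ℝ => |y|) (nhds 0) (nhds 0) := by
        simpa using continuous_abs.tendsto (0:ℝ)
      exact h2.mono_left nhdsWithin_le_nhds
  · have hd := hasDerivAt_pow 2 x
    have hev : (fun y => pcut y ^ 2) =ᶠ[nhds x] fun y => y ^ 2 := by
      filter_upwards [Ioi_mem_nhds hx] with y hy
      simp [pcut, max_eq_left (le_of_lt (Set.mem_Ioi.mp hy))]
    have := hd.congr_of_eventuallyEq hev
    simpa [pcut, max_eq_left hx.le] using this

noncomputable def pogF (a ρ : ℝ) : ℝ := ρ + a * (ρ - a) ^ 3 * pcut (ρ - a / 2) ^ 3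

noncomputable def pogF' (a ρ : ℝ) : ℝ :=
  1 + a * (3 * (ρ - a) ^ 2 * pcut (ρ - a / 2) ^ 3 + (ρ - a) ^ 3 * (3 * pcut (ρ - a / 2) ^ 2))

noncomputable def pogF'' (a ρ : ℝ) : ℝ :=
  a * (6 * (ρ - a) * pcut (ρ - a / 2) ^ 3 + 18 * (ρ - a) ^ 2 * pcut (ρ - a / 2) ^ 2
    + 6 * (ρ - a) ^ 3 * pcut (ρ - a / 2))

lemma pog_eq (a : ℝ) : pogProfile a = pogF a := by
  funext ρ
  unfold pogProfile pogF pcut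
  split_ifs with h
  · rw [max_eq_right (by linarith)]; ring
  · rw [max_eq_left (by push_neg at h; linarith)]

lemma hasDerivAt_pcut3_comp (c x : ℝ) :
    HasDerivAt (fun ρ : ℝ => pcut (ρ - c) ^ 3) (3 * pcut (x - c) ^ 2) x := by
  simpa [Function.comp_def] using (hasDerivAt_pcut_pow3 (x - c)).comp x ((hasDerivAt_id x).sub_const c)

lemma hasDerivAt_pcut2_comp (c x : ℝ) :
    HasDerivAt (fun ρ : ℝ => pcut (ρ - c) ^ 2) (2 * pcut (x - c)) x := by
  simpa [Function.comp_def] using (hasDerivAt_pcut_pow2 (x - c)).comp x ((hasDerivAt_id x).sub_const c)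

lemma hasDerivAt_sub_pow3 (a x : ℝ) :
    HasDerivAt (fun ρ : ℝ => (ρ - a) ^ 3) (3 * (x - a) ^ 2) x := by
  simpa [Function.comp_def] using (hasDerivAt_pow 3 (x - a)).comp x ((hasDerivAt_id x).sub_const a)

lemma hasDerivAt_sub_pow2 (a x : ℝ) :
    HasDerivAt (fun ρ : ℝ => (ρ - a) ^ 2) (2 * (x - a)) x := by
  simpa [Function.comp_def] using (hasDerivAt_pow 2 (x - a)).comp x ((hasDerivAt_id x).sub_const a)

lemma hasDerivAt_pogF (a x : ℝ) : HasDerivAt (pogF a) (pogF' a x) x := by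
  have h := (hasDerivAt_id x).add
    (((hasDerivAt_sub_pow3 a x).const_mul a).mul (hasDerivAt_pcut3_comp (a/2) x))
  have heq : pogF' a x =
      1 + (a * (3 * (x - a) ^ 2) * pcut (x - a / 2) ^ 3
        + a * (x - a) ^ 3 * (3 * pcut (x - a / 2) ^ 2)) := by
    unfold pogF'; ring
  rw [heq]
  exact h

lemma hasDerivAt_pogF' (a x : ℝ) : HasDerivAt (pogF' a) (pogF'' a x) x := by
  have hu1 := (hasDerivAt_sub_pow2 a x).const_mul (3:ℝ)
  have hv2 := (hasDerivAt_pcut2_comp (a/2) x).const_mul (3:ℝ)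
  have h := (hasDerivAt_const x (1:ℝ)).add
    (((hu1.mul (hasDerivAt_pcut3_comp (a/2) x)).add
      ((hasDerivAt_sub_pow3 a x).mul hv2)).const_mul a)
  have heq : pogF'' a x =
      0 + a * ((3 * (2 * (x - a)) * pcut (x - a / 2) ^ 3
          + 3 * (x - a) ^ 2 * (3 * pcut (x - a / 2) ^ 2))
        + (3 * (x - a) ^ 2 * (3 * pcut (x - a / 2) ^ 2)
          + (x - a) ^ 3 * (3 * (2 * pcut (x - a / 2))))) := by
    unfold pogF''; ring
  rw [heq]
  exact h

lemma deriv_pogF (a : ℝ) : deriv (pogF a) = pogF' a :=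
  funext fun x => (hasDerivAt_pogF a x).deriv

lemma deriv_pogF' (a : ℝ) : deriv (pogF' a) = pogF'' a :=
  funext fun x => (hasDerivAt_pogF' a x).deriv

lemma continuous_pcut_comp (c : ℝ) : Continuous (fun x : ℝ => pcut (x - c)) :=
  (continuous_id.sub continuous_const).max continuous_const

lemma continuous_pogF'' (a : ℝ) : Continuous (pogF'' a) := by
  have h := continuous_pcut_comp (a/2)
  unfold pogF''
  fun_prop

def IsLipOn (s : Set ℝ) (f : ℝ → ℝ) : Prop := ∃ K : NNReal, LipschitzOnWith K f s

lemma IsLipOn.const (s : Set ℝ) (c : ℝ) : IsLipOn s fun _ => c :=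
  ⟨0, (LipschitzWith.const c).lipschitzOnWith⟩

lemma IsLipOn.id (s : Set ℝ) : IsLipOn s fun x => x :=
  ⟨1, LipschitzWith.id.lipschitzOnWith⟩

lemma IsLipOn.pcut_comp (s : Set ℝ) (c : ℝ) : IsLipOn s fun x => pcut (x - c) := by
  refine ⟨1, LipschitzWith.lipschitzOnWith ?_⟩
  have h1 : LipschitzWith 1 (fun x : ℝ => x - c) := by
    apply LipschitzWith.of_dist_le_mul
    intro x y
    simp [Real.dist_eq]
  exact h1.max_const 0

lemma IsLipOn.sub_const (s : Set ℝ) (c : ℝ) : IsLipOn s fun x => x - c := by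
  refine ⟨1, LipschitzWith.lipschitzOnWith ?_⟩
  apply LipschitzWith.of_dist_le_mul
  intro x y
  simp [Real.dist_eq]

lemma IsLipOn.add {s : Set ℝ} {f g : ℝ → ℝ} (hf : IsLipOn s f) (hg : IsLipOn s g) :
    IsLipOn s fun x => f x + g x := by
  obtain ⟨Kf, hKf⟩ := hf
  obtain ⟨Kg, hKg⟩ := hg
  refine ⟨Kf + Kg, ?_⟩
  rw [lipschitzOnWith_iff_dist_le_mul] at *
  intro x hx y hy
  have h1 := hKf x hx y hy
  have h2 := hKg x hx y hy
  rw [Real.dist_eq] at *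
  push_cast
  calc |f x + g x - (f y + g y)| = |(f x - f y) + (g x - g y)| := by ring_nf
    _ ≤ |f x - f y| + |g x - g y| := abs_add_le _ _
    _ ≤ Kf * |x - y| + Kg * |x - y| := add_le_add h1 h2
    _ = (Kf + Kg) * |x - y| := by ring

lemma IsLipOn.mul {s : Set ℝ} {f g : ℝ → ℝ} (hs : IsCompact s)
    (hf : IsLipOn s f) (hg : IsLipOn s g) : IsLipOn s fun x => f x * g x := by
  obtain ⟨Kf, hKf⟩ := hf
  obtain ⟨Kg, hKg⟩ := hg
  obtain ⟨Bf, hBf⟩ := hs.exists_bound_of_continuousOn hKf.continuousOn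
  obtain ⟨Bg, hBg⟩ := hs.exists_bound_of_continuousOn hKg.continuousOn
  refine ⟨⟨max Bf 0, le_max_right _ _⟩ * Kg + Kf * ⟨max Bg 0, le_max_right _ _⟩, ?_⟩
  rw [lipschitzOnWith_iff_dist_le_mul] at *
  intro x hx y hy
  have h1 := hKf x hx y hy
  have h2 := hKg x hx y hy
  rw [Real.dist_eq] at h1 h2 ⊢
  have hbf : |f x| ≤ max Bf 0 := le_trans (by simpa using hBf x hx) (le_max_left _ _)
  have hbg : |g y| ≤ max Bg 0 := le_trans (by simpa using hBg y hy) (le_max_left _ _)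
  push_cast
  calc |f x * g x - f y * g y| = |f x * (g x - g y) + (f x - f y) * g y| := by ring_nf
    _ ≤ |f x * (g x - g y)| + |(f x - f y) * g y| := abs_add_le _ _
    _ = |f x| * |g x - g y| + |f x - f y| * |g y| := by rw [abs_mul, abs_mul]
    _ ≤ max Bf 0 * (Kg * |x - y|) + Kf * |x - y| * max Bg 0 := by
        have e1 : |f x| * |g x - g y| ≤ max Bf 0 * (Kg * |x - y|) :=
          mul_le_mul hbf h2 (abs_nonneg _) (le_max_right _ _)
        have e2 : |f x - f y| * |g y| ≤ Kf * |x - y| * max Bg 0 :=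
          mul_le_mul h1 hbg (abs_nonneg _) (mul_nonneg (NNReal.coe_nonneg _) (abs_nonneg _))
        exact add_le_add e1 e2
    _ = (max Bf 0 * Kg + Kf * max Bg 0) * |x - y| := by ring

lemma IsLipOn.pow {s : Set ℝ} {f : ℝ → ℝ} (hs : IsCompact s) (hf : IsLipOn s f) :
    ∀ n : ℕ, IsLipOn s fun x => f x ^ n
  | 0 => by simpa using IsLipOn.const s 1
  | n + 1 => by
      have h := (IsLipOn.pow hs hf n).mul hs hf
      simpa [pow_succ] using h

/-- Pogorelov's profile function `f_a` is of class `C^{2,1}` on `[0, a)`: it is twice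
continuously differentiable there (in particular `f_a'(a/2) = 1` and `f_a''(a/2) = 0`),
and `f_a''` is Lipschitz on every compact subset of `[0, a)`. -/
theorem profile_isC21 (a : ℝ) (ha : 0 < a) :
    ContDiffOn ℝ 2 (pogProfile a) (Set.Ico 0 a) ∧
    deriv (pogProfile a) (a / 2) = 1 ∧
    deriv (deriv (pogProfile a)) (a / 2) = 0 ∧
    ∀ s : Set ℝ, IsCompact s → s ⊆ Set.Ico 0 a →
      ∃ K : NNReal, LipschitzOnWith K (deriv (deriv (pogProfile a))) s := by
  have hC2 : ContDiff ℝ 2 (pogProfile a) := by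
    rw [pog_eq]
    have h2 := contDiff_succ_iff_deriv (𝕜 := ℝ) (f := pogF a) (n := 1)
    norm_num at h2
    refine h2.mpr ⟨fun x => (hasDerivAt_pogF a x).differentiableAt, ?_⟩
    rw [deriv_pogF, contDiff_one_iff_deriv]
    refine ⟨fun x => (hasDerivAt_pogF' a x).differentiableAt, ?_⟩
    rw [deriv_pogF']
    exact continuous_pogF'' a
  have hd1 : deriv (pogProfile a) = pogF' a := by rw [pog_eq, deriv_pogF]
  have hd2 : deriv (deriv (pogProfile a)) = pogF'' a := by rw [hd1, deriv_pogF']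
  refine ⟨hC2.contDiffOn, ?_, ?_, ?_⟩
  · rw [hd1]; unfold pogF'; simp [pcut_zero]
  · rw [hd2]; unfold pogF''; simp [pcut_zero]
  · intro s hs hsub
    rw [hd2]
    have hsa : IsLipOn s (fun x => x - a) := IsLipOn.sub_const s a
    have hp : IsLipOn s (fun x => pcut (x - a / 2)) := IsLipOn.pcut_comp s (a / 2)
    have t1 : IsLipOn s (fun x => 6 * (x - a) * pcut (x - a / 2) ^ 3) :=
      ((IsLipOn.const s 6).mul hs hsa).mul hs (hp.pow hs 3)
    have t2 : IsLipOn s (fun x => 18 * (x - a) ^ 2 * pcut (x - a / 2) ^ 2) :=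
      ((IsLipOn.const s 18).mul hs (hsa.pow hs 2)).mul hs (hp.pow hs 2)
    have t3 : IsLipOn s (fun x => 6 * (x - a) ^ 3 * pcut (x - a / 2)) :=
      ((IsLipOn.const s 6).mul hs (hsa.pow hs 3)).mul hs hp
    have total : IsLipOn s (fun x => a * (6 * (x - a) * pcut (x - a / 2) ^ 3
        + 18 * (x - a) ^ 2 * pcut (x - a / 2) ^ 2 + 6 * (x - a) ^ 3 * pcut (x - a / 2))) :=
      (IsLipOn.const s a).mul hs ((t1.add t2).add t3)
    exact total
end
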